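/- The Arf pattern x₁+x₂−x₃ induces every strongly admissible pattern; that is, if a numerical semigroup S admits the Arf pattern, then S admits every pattern p with ad(p) ≥ 2. -/

import Mathlib

/-- A numerical semigroup: an additive submonoid of ℕ with finite complement. -/
def IsNumericalSemigroup (S : Set ℕ) : Prop :=
  0 ∈ S ∧ (∀ a ∈ S, ∀ b ∈ S, a + b ∈ S) ∧ Sᶜ.Finite

/-- Evaluation of a pattern (list of coefficients a₁,…,aₙ) at s₁,…,sₙ. -/
def patEval (p : List ℤ) (s : ℕ → ℕ) : ℤ :=
  ∑ i ∈ Finset.range p.length, p.getD i 0 * (s i : ℤ)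

/-- `S` admits the pattern `p`: p(s₁,…,sₙ) ∈ S for all s₁ ≥ ⋯ ≥ sₙ in S. -/
def AdmitsPat (S : Set ℕ) (p : List ℤ) : Prop :=
  ∀ s : ℕ → ℕ, (∀ i, s i ∈ S) → (∀ i j, i ≤ j → s j ≤ s i) →
    ∃ m ∈ S, (m : ℤ) = patEval p s

/-- A pattern is admissible if it is admitted by some numerical semigroup. -/
def Admissible (p : List ℤ) : Prop :=
  ∃ S : Set ℕ, IsNumericalSemigroup S ∧ AdmitsPat S p

/-- The derivative p' of a pattern. -/
def pderiv : List ℤ → List ℤ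
  | [] => []
  | a :: q => if a = 1 then q else (a - 1) :: q

/-- The admissibility degree: least k such that p⁽ᵏ⁾ is not admissible, or ∞. -/
noncomputable def adDeg (p : List ℤ) : ℕ∞ :=
  sInf ((fun m : ℕ => (m : ℕ∞)) '' {m : ℕ | ¬ Admissible (pderiv^[m] p)})

/-- The partial sum bᵢ = a₁ + ⋯ + aᵢ of the coefficients of `p`. -/
def psum (p : List ℤ) (i : ℕ) : ℤ :=
  ∑ j ∈ Finset.range i, p.getD j 0

/-- The Arf pattern induces every strongly admissible pattern: if S admits
x₁ + x₂ − x₃ then S admits every pattern p with ad(p) ≥ 2. -/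
lemma my_nsmul_mem {S : Set ℕ} (h0 : 0 ∈ S) (hadd : ∀ a ∈ S, ∀ b ∈ S, a + b ∈ S) :
    ∀ (k x : ℕ), x ∈ S → k * x ∈ S := by
  intro k x hx
  induction k with
  | zero => simpa using h0
  | succ k ih => simpa [Nat.succ_mul] using hadd _ ih _ hx

-- single Arf step

lemma my_arf_step {S : Set ℕ} (hArf : AdmitsPat S [1, 1, -1]) {w x y : ℕ}
    (hw : w ∈ S) (hx : x ∈ S) (hy : y ∈ S) (hyx : y ≤ x) (hxw : x ≤ w) :
    w + (x - y) ∈ S := by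
  obtain ⟨m, hmS, hmeq⟩ := hArf (fun i => if i = 0 then w else if i = 1 then x else y)
    (by intro i; split_ifs <;> assumption)
    (by intro i j hij; split_ifs <;> omega)
  have hpe : patEval [1, 1, -1] (fun i => if i = 0 then w else if i = 1 then x else y)
      = (w : ℤ) + x - y := by
    simp [patEval, Finset.sum_range_succ]
    ring
  rw [hpe] at hmeq
  have : m = w + (x - y) := by omega
  exact this ▸ hmS

lemma my_arf_mul {S : Set ℕ} (hArf : AdmitsPat S [1, 1, -1]) {u x y : ℕ}
    (hu : u ∈ S) (hx : x ∈ S) (hy : y ∈ S) (hyx : y ≤ x) (hxu : x ≤ u) :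
    ∀ k : ℕ, u + k * (x - y) ∈ S := by
  intro k
  induction k with
  | zero => simpa using hu
  | succ k ih =>
    have hstep := my_arf_step hArf ih hx hy hyx (le_trans hxu (Nat.le_add_right _ _))
    have : u + (k + 1) * (x - y) = u + k * (x - y) + (x - y) := by ring
    rw [this]; exact hstep

lemma my_main {S : Set ℕ} (h0 : 0 ∈ S) (hadd : ∀ a ∈ S, ∀ b ∈ S, a + b ∈ S)
    (hArf : AdmitsPat S [1, 1, -1]) :
    ∀ (n : ℕ) (a : ℕ → ℤ), (∀ i, 1 ≤ i → i ≤ n → 1 ≤ ∑ j ∈ Finset.range i, a j) →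
    ∀ s : ℕ → ℕ, (∀ i, s i ∈ S) → (∀ i j, i ≤ j → s j ≤ s i) →
    ∃ m ∈ S, (m : ℤ) = ∑ i ∈ Finset.range n, a i * (s i : ℤ) ∧ (1 ≤ n → s 0 ≤ m) := by
  intro n
  induction n with
  | zero => intro a _ s _ _; exact ⟨0, h0, by simp, by omega⟩
  | succ n ih =>
    intro a ha s hsS hanti
    rcases Nat.eq_zero_or_pos n with rfl | hn
    · have h1 : 1 ≤ a 0 := by simpa [psum] using ha 1 le_rfl le_rfl
      refine ⟨(a 0).toNat * s 0, my_nsmul_mem h0 hadd _ _ (hsS 0), ?_, ?_⟩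
      · push_cast [Int.toNat_of_nonneg (by omega : (0:ℤ) ≤ a 0)]
        simp [Finset.sum_range_one]
      · intro _
        calc s 0 = 1 * s 0 := (one_mul _).symm
        _ ≤ (a 0).toNat * s 0 := Nat.mul_le_mul_right _ (by omega)
    · rcases le_or_gt 0 (a n) with hc | hc
      · obtain ⟨u, huS, hueq, hus⟩ := ih a (fun i h1 h2 => ha i h1 (by omega)) s hsS hanti
        refine ⟨u + (a n).toNat * s n,
          hadd _ huS _ (my_nsmul_mem h0 hadd _ _ (hsS n)), ?_, ?_⟩
        · rw [Finset.sum_range_succ, ← hueq]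
          push_cast [Int.toNat_of_nonneg hc]
          ring
        · intro _; exact le_trans (hus hn) (Nat.le_add_right _ _)
      · obtain ⟨m', rfl⟩ : ∃ m', n = m' + 1 := ⟨n - 1, by omega⟩
        set a' : ℕ → ℤ := fun i => if i = m' then a m' + a (m' + 1) else a i with ha'def
        have hsum_lt : ∀ i ≤ m', ∑ j ∈ Finset.range i, a' j = ∑ j ∈ Finset.range i, a j := by
          intro i hi
          refine Finset.sum_congr rfl fun j hj => ?_
          have : j < i := Finset.mem_range.mp hj
          simp [ha'def, show j ≠ m' by omega]
        have hsum_top : ∑ j ∈ Finset.range (m' + 1), a' j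
            = ∑ j ∈ Finset.range (m' + 2), a j := by
          rw [Finset.sum_range_succ, hsum_lt m' le_rfl, Finset.sum_range_succ,
            Finset.sum_range_succ]
          simp [ha'def]
          ring
        have ha' : ∀ i, 1 ≤ i → i ≤ m' + 1 → 1 ≤ ∑ j ∈ Finset.range i, a' j := by
          intro i h1 h2
          rcases eq_or_lt_of_le h2 with rfl | hlt
          · rw [hsum_top]; exact ha (m' + 2) (by omega) le_rfl
          · rw [hsum_lt i (by omega)]; exact ha i h1 (by omega)
        obtain ⟨u, huS, hueq, hus⟩ := ih a' ha' s hsS hanti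
        have hs0 : s 0 ≤ u := hus (by omega)
        have hsm : s (m' + 1) ≤ s m' := hanti m' (m' + 1) (by omega)
        have hsmu : s m' ≤ u := le_trans (hanti 0 m' (by omega)) hs0
        refine ⟨u + (-(a (m' + 1))).toNat * (s m' - s (m' + 1)),
          my_arf_mul hArf huS (hsS m') (hsS (m' + 1)) hsm hsmu _, ?_, ?_⟩
        · have hU : (u : ℤ) = ∑ i ∈ Finset.range m', a i * (s i : ℤ)
              + (a m' + a (m' + 1)) * (s m' : ℤ) := by
            rw [hueq, Finset.sum_range_succ]
            congr 1
            · refine Finset.sum_congr rfl fun j hj => ?_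
              have : j < m' := Finset.mem_range.mp hj
              simp [ha'def, show j ≠ m' by omega]
            · simp [ha'def]
          rw [Finset.sum_range_succ, Finset.sum_range_succ]
          push_cast [Int.toNat_of_nonneg (by omega : (0:ℤ) ≤ -(a (m' + 1))),
            Nat.cast_sub hsm]
          rw [hU]
          ring
        · intro _; exact le_trans hs0 (Nat.le_add_right _ _)

lemma my_adm_psum {p : List ℤ} (h : Admissible p) : ∀ i ≤ p.length, 0 ≤ psum p i := by
  obtain ⟨T, ⟨h0, hadd, hfin⟩, hadm⟩ := h
  have hTinf : T.Infinite := by simpa using hfin.infinite_compl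
  obtain ⟨M, hMT, hMpos⟩ := hTinf.exists_gt 0
  intro i hi
  by_contra hneg
  push_neg at hneg
  obtain ⟨m, hmT, hmeq⟩ := hadm (fun j => if j < i then M else 0)
    (by intro j; split_ifs <;> assumption)
    (by intro j k hjk; split_ifs <;> omega)
  have hpe : patEval p (fun j => if j < i then M else 0) = psum p i * M := by
    unfold patEval psum
    rw [Finset.sum_mul]
    rw [show Finset.range i = (Finset.range p.length).filter (· < i) by
      ext j; simp [Finset.mem_filter]; omega]
    rw [Finset.sum_filter]
    refine Finset.sum_congr rfl fun j _ => ?_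
    by_cases h : j < i <;> simp [h]
  rw [hpe] at hmeq
  have : psum p i * M < 0 :=
    mul_neg_of_neg_of_pos hneg (by exact_mod_cast hMpos)
  omega

lemma my_psum_cons (x : ℤ) (q : List ℤ) (i : ℕ) :
    psum (x :: q) (i + 1) = x + psum q i := by
  unfold psum
  rw [Finset.sum_range_succ']
  simp [add_comm]

theorem stmt_12 (S : Set ℕ) (hS : IsNumericalSemigroup S)
    (hArf : AdmitsPat S [1, 1, -1])
    (p : List ℤ) (hp : ∀ a ∈ p, a ≠ 0) (hdeg : 2 ≤ adDeg p) :
    AdmitsPat S p := by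
  obtain ⟨h0, hadd, -⟩ := hS
  have hnot : ∀ m : ℕ, m < 2 → Admissible (pderiv^[m] p) := by
    intro m hm
    by_contra hc
    have h1 : adDeg p ≤ (m : ℕ∞) := sInf_le ⟨m, hc, rfl⟩
    have h2 : ((m : ℕ) : ℕ∞) < 2 := by exact_mod_cast hm
    exact absurd (le_trans hdeg h1) (not_le.mpr h2)
  have hA0 : Admissible p := by simpa using hnot 0 (by norm_num)
  have hA1 : Admissible (pderiv p) := by simpa using hnot 1 (by norm_num)
  -- strongly admissible: all partial sums at least 1
  have hstrong : ∀ i, 1 ≤ i → i ≤ p.length → 1 ≤ psum p i := by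
    match p, hp, hA0, hA1 with
    | [], _, _, _ => intro i h1 h2; simp at h2; omega
    | a :: q, hp, hA0, hA1 =>
      have ha0 : 0 ≤ a := by
        have := my_adm_psum hA0 1 (by simp)
        simpa [psum] using this
      have hane : a ≠ 0 := hp a List.mem_cons_self
      have ha1 : 1 ≤ a := by omega
      intro i h1 h2
      obtain ⟨i', rfl⟩ : ∃ i', i = i' + 1 := ⟨i - 1, by omega⟩
      rw [my_psum_cons]
      by_cases hA : a = 1
      · have hq : ∀ j ≤ q.length, 0 ≤ psum q j := by
          have : pderiv (a :: q) = q := by simp [pderiv, hA]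
          exact my_adm_psum (this ▸ hA1)
        have := hq i' (by simpa using h2)
        omega
      · have hq : ∀ j ≤ q.length + 1, 0 ≤ psum ((a - 1) :: q) j := by
          have : pderiv (a :: q) = (a - 1) :: q := by simp [pderiv, hA]
          intro j hj; exact my_adm_psum (this ▸ hA1) j (by simpa using hj)
        have := hq (i' + 1) (by simpa using h2)
        rw [my_psum_cons] at this
        omega
  intro s hsS hanti
  obtain ⟨m, hmS, hmeq, -⟩ := my_main h0 hadd hArf p.length (fun i => p.getD i 0)
    (fun i h1 h2 => hstrong i h1 h2) s hsS hanti
  exact ⟨m, hmS, hmeq⟩
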